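/- Let (x1, y1) be a point on the twisted Edwards curve E_{a,d} and assume 1 + d·x1²·y1² ≠ 0 and 1 − d·x1²·y1² ≠ 0. Let (x3, y3) = (2·x1·y1/(1 + d·x1²·y1²), (y1² − a·x1²)/(1 − d·x1²·y1²)) be its Edwards double. Define c_{Z²} = x1·(1 − y1), c_{XY} = d·x1²·y1 − 1, c_{XZ} = y1 − a·x1². Then the conic φ = c_{Z²}·(Z² + Y·Z) + c_{XY}·X·Y + c_{XZ}·X·Z passes through the mirror point (−x3, y3) of the double: c_{Z²}·(1 + y3) − c_{XY}·x3·y3 − c_{XZ}·x3 = 0. -/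

import Mathlib

/-- The tangent conic at a point (x₁, y₁) of the twisted Edwards curve passes through
the mirror image (−x₃, y₃) of the Edwards double (x₃, y₃) = 2·(x₁, y₁). -/
theorem tangent_conic_passes_through_mirror_of_double
    (K : Type*) [Field K] (hchar : (2 : K) ≠ 0)
    (a d : K) (ha : a ≠ 0) (hd : d ≠ 0) (had : a ≠ d)
    (x1 y1 : K)
    (h1 : a * x1 ^ 2 + y1 ^ 2 = 1 + d * x1 ^ 2 * y1 ^ 2)
    (hden1 : 1 + d * x1 ^ 2 * y1 ^ 2 ≠ 0)
    (hden2 : 1 - d * x1 ^ 2 * y1 ^ 2 ≠ 0)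
    (x3 y3 : K)
    (hx3 : x3 = 2 * x1 * y1 / (1 + d * x1 ^ 2 * y1 ^ 2))
    (hy3 : y3 = (y1 ^ 2 - a * x1 ^ 2) / (1 - d * x1 ^ 2 * y1 ^ 2))
    (cZ2 cXY cXZ : K)
    (hcZ2 : cZ2 = x1 * (1 - y1))
    (hcXY : cXY = d * x1 ^ 2 * y1 - 1)
    (hcXZ : cXZ = y1 - a * x1 ^ 2) :
    cZ2 * (1 + y3) - cXY * (x3 * y3) - cXZ * x3 = 0 := by
  subst hx3 hy3 hcZ2 hcXY hcXZ
  apply mul_left_cancel₀ (mul_ne_zero hden1 hden2)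
  field_simp
  linear_combination (x1*(1-y1)*(d*x1^2*y1^2 - 1)) * h1
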